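/- Interval modules are indecomposable: for any interval I in the finite totally ordered set {1,…,n}, the interval persistence module χ_I (which is the ground field on indices in I with identity structure maps, and 0 elsewhere) cannot be written as a direct sum of two nonzero persistence submodules. -/

import Mathlib

open Classical

universe u v

/-- A persistence module over the index set `Fin n` (representing `{1,…,n}`),
valued in vector spaces over a field `K`. -/
structure PMod (K : Type u) [Field K] (n : ℕ) where
  V : Fin n → Type v
  [acg : ∀ i, AddCommGroup (V i)]
  [mod : ∀ i, Module K (V i)]
  map : ∀ i j : Fin n, i ≤ j → (V i →ₗ[K] V j)
  map_id : ∀ i, map i i le_rfl = LinearMap.id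
  map_comp : ∀ i j k : Fin n, ∀ (hij : i ≤ j) (hjk : j ≤ k),
    (map j k hjk).comp (map i j hij) = map i k (hij.trans hjk)

attribute [instance] PMod.acg PMod.mod

/-- The spaces of the interval module `χ_I`: the ground field (as the full
submodule `⊤` of `K`) on indices in `I`, and `0` elsewhere. -/
noncomputable def chiV (K : Type*) [Field K] {n : ℕ} (I : Set (Fin n))
    (i : Fin n) : Submodule K K :=
  if i ∈ I then ⊤ else ⊥

/-- The structure maps of the interval module `χ_I`: the identity whenever
both indices lie in `I`, and zero otherwise. -/
noncomputable def chiMap (K : Type*) [Field K] {n : ℕ} (I : Set (Fin n))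
    (i j : Fin n) : (chiV K I i) →ₗ[K] (chiV K I j) where
  toFun x := ⟨if i ∈ I ∧ j ∈ I then (x : K) else 0, by
    by_cases hc : i ∈ I ∧ j ∈ I
    · simp [chiV, hc.2, if_pos hc]
    · simp [if_neg hc]⟩
  map_add' x y := by
    apply Subtype.ext
    by_cases hc : i ∈ I ∧ j ∈ I <;> simp [hc]
  map_smul' c x := by
    apply Subtype.ext
    by_cases hc : i ∈ I ∧ j ∈ I <;> simp [hc]

/-- The interval persistence module `χ_I` for an interval `I` in `{1,…,n}`. -/
noncomputable def chi (K : Type*) [Field K] {n : ℕ} (I : Set (Fin n))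
    (hI : ∀ i j k : Fin n, i ≤ j → j ≤ k → i ∈ I → k ∈ I → j ∈ I) :
    PMod K n where
  V i := chiV K I i
  map i j _ := chiMap K I i j
  map_id i := by
    apply LinearMap.ext; intro x
    apply Subtype.ext
    by_cases hi : i ∈ I
    · simp [chiMap, hi]
    · have hx : (x : K) = 0 := by
        have h2 : (x : K) ∈ chiV K I i := x.2
        have hc : chiV K I i = ⊥ := if_neg hi
        have key : ∀ y : K, y ∈ chiV K I i → y = 0 := by
          intro y hy
          rw [hc] at hy
          exact (Submodule.mem_bot K).mp hy
        exact key _ h2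
      simp [chiMap, hi, hx]
  map_comp i j k hij hjk := by
    apply LinearMap.ext; intro x
    apply Subtype.ext
    by_cases hik : i ∈ I ∧ k ∈ I
    · have hj : j ∈ I := hI i j k hij hjk hik.1 hik.2
      simp [chiMap, hik.1, hik.2, hj]
    · by_cases hi : i ∈ I
      · by_cases hk : k ∈ I
        · exact absurd ⟨hi, hk⟩ hik
        · simp [chiMap, hk]
      · simp [chiMap, hi]

lemma chiV_zero_of_not_mem (K : Type*) [Field K] {n : ℕ} {I : Set (Fin n)}
    {i : Fin n} (hi : i ∉ I) (x : chiV K I i) : x = 0 := by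
  apply Subtype.ext
  have h2 : (x : K) ∈ chiV K I i := x.2
  have hc : chiV K I i = ⊥ := if_neg hi
  have key : ∀ y : K, y ∈ chiV K I i → y = 0 := by
    intro y hy
    rw [hc] at hy
    exact (Submodule.mem_bot K).mp hy
  exact key _ h2

lemma submodule_eq_top_of_ne_bot (K : Type*) [Field K] {n : ℕ} {I : Set (Fin n)}
    {i : Fin n} (hi : i ∈ I) (S : Submodule K (chiV K I i)) (hS : S ≠ ⊥) :
    S = ⊤ := by
  obtain ⟨x, hxS, hx0⟩ := Submodule.exists_mem_ne_zero_of_ne_bot hS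
  have hxK : (x : K) ≠ 0 := fun h => hx0 (Subtype.ext h)
  rw [eq_top_iff]
  intro y _
  have : y = ((y : K) * (x : K)⁻¹) • x := by
    apply Subtype.ext
    simp [Submodule.coe_smul, smul_eq_mul, mul_assoc, inv_mul_cancel₀ hxK]
  rw [this]
  exact S.smul_mem _ hxS

/-- interval modules are indecomposable: for any nonempty
interval `I` in the finite totally ordered set `{1,…,n}`, the interval module
`χ_I` cannot be written as a direct sum of two nonzero persistence
submodules.  A decomposition `χ_I ≅ A ⊕ B` is given by families of submodules
`A i, B i` of the spaces of `χ_I` that are invariant under the structure maps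
and are complementary (`A i ⊓ B i = ⊥` and `A i ⊔ B i = ⊤`) at every index;
the conclusion is that one of the two summands is zero. -/
theorem interval_module_indecomposable (K : Type*) [Field K] {n : ℕ}
    (I : Set (Fin n)) (hne : I.Nonempty)
    (hI : ∀ i j k : Fin n, i ≤ j → j ≤ k → i ∈ I → k ∈ I → j ∈ I)
    (A B : ∀ i : Fin n, Submodule K ((chi K I hI).V i))
    (hAinv : ∀ i j : Fin n, ∀ h : i ≤ j, ∀ x ∈ A i, (chi K I hI).map i j h x ∈ A j)
    (hBinv : ∀ i j : Fin n, ∀ h : i ≤ j, ∀ x ∈ B i, (chi K I hI).map i j h x ∈ B j)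
    (hinf : ∀ i, A i ⊓ B i = ⊥) (hsup : ∀ i, A i ⊔ B i = ⊤) :
    (∀ i, A i = ⊥) ∨ (∀ i, B i = ⊥) := by
  by_contra hcon
  push_neg at hcon
  obtain ⟨⟨i0, hA⟩, ⟨j0, hB⟩⟩ := hcon
  -- i0 and j0 must lie in I
  have hi0 : i0 ∈ I := by
    by_contra h
    apply hA
    rw [eq_bot_iff]
    intro x _
    rw [chiV_zero_of_not_mem K h x]
    exact Submodule.zero_mem _
  have hj0 : j0 ∈ I := by
    by_contra h
    apply hB
    rw [eq_bot_iff]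
    intro x _
    rw [chiV_zero_of_not_mem K h x]
    exact Submodule.zero_mem _
  have hAtop : A i0 = ⊤ := submodule_eq_top_of_ne_bot K hi0 _ hA
  have hBtop : B j0 = ⊤ := submodule_eq_top_of_ne_bot K hj0 _ hB
  have hAj0 : A j0 = ⊥ := by
    have := hinf j0
    rwa [hBtop, inf_top_eq] at this
  have hBi0 : B i0 = ⊥ := by
    have := hinf i0
    rwa [hAtop, top_inf_eq] at this
  rcases le_total i0 j0 with hle | hle
  · obtain ⟨x1, hx1v⟩ : ∃ x : chiV K I i0, (x : K) = 1 := ⟨⟨1, by simp [chiV, hi0]⟩, rfl⟩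
    have hx1A : x1 ∈ A i0 := by rw [hAtop]; exact trivial
    have himg := hAinv i0 j0 hle x1 hx1A
    rw [hAj0, Submodule.mem_bot] at himg
    have h0 : chiMap K I i0 j0 x1 = (0 : chiV K I j0) := himg
    have h1 := congrArg Subtype.val h0
    simp [chiMap, hi0, hj0, hx1v] at h1
  · obtain ⟨x1, hx1v⟩ : ∃ x : chiV K I j0, (x : K) = 1 := ⟨⟨1, by simp [chiV, hj0]⟩, rfl⟩
    have hx1B : x1 ∈ B j0 := by rw [hBtop]; exact trivial
    have himg := hBinv j0 i0 hle x1 hx1B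
    rw [hBi0, Submodule.mem_bot] at himg
    have h0 : chiMap K I j0 i0 x1 = (0 : chiV K I i0) := himg
    have h1 := congrArg Subtype.val h0
    simp [chiMap, hi0, hj0, hx1v] at h1
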